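/- Let Γ be a closed Noetherian graph on a Polish space X and let A ⊆ X be a Γ-good set. If x ∈ X is an accumulation point of a set a ⊆ A of points all Γ-connected to x, then x ∈ A. Consequently, for every x ∈ X \ A there is an open neighborhood O of x containing no element of A that is Γ-connected to x. -/

import Mathlib

def VariationEmbedding {X : Type*} (Γ : X → X → Prop) (cross : ℕ → ℕ → Prop) : Prop :=
  ∃ (x y : ℕ → X) (b₀ b₁ : Bool),
    Function.Injective x ∧ Function.Injective y ∧ (∀ n m, x n ≠ y m) ∧
    (∀ n m, n ≠ m → (Γ (x n) (x m) ↔ b₀ = true)) ∧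
    (∀ n m, n ≠ m → (Γ (y n) (y m) ↔ b₁ = true)) ∧
    (∀ n m, Γ (x n) (y m) ↔ cross n m)

def GraphNoetherian {X : Type*} (Γ : X → X → Prop) : Prop :=
  ¬ VariationEmbedding Γ (fun n m => m < n) ∧ ¬ VariationEmbedding Γ (fun n m => m ≠ n)

/-- `♥(a)` for a finite set `a`. -/
def heartF {X : Type*} (Γ : X → X → Prop) (a : Finset X) : Set X :=
  {x | (∀ y ∈ a, x = y ∨ Γ x y) ∧ ∀ z, (∀ y ∈ a, z = y ∨ Γ z y) → (x = z ∨ Γ x z)}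

/-- A set is `Γ`-good if it contains `♥(a)` for each of its finite subsets `a`. -/
def GoodSet {X : Type*} (Γ : X → X → Prop) (A : Set X) : Prop :=
  ∀ a : Finset X, ↑a ⊆ A → heartF Γ a ⊆ A

open Filter in
/-- Infinite Ramsey theorem for pairs with two colors, proved via an ultrafilter. -/
lemma infinite_ramsey_pairs (f : ℕ → ℕ → Prop) :
    ∃ (g : ℕ → ℕ) (b : Bool), StrictMono g ∧
      ∀ k l, k < l → (f (g k) (g l) ↔ b = true) := by
  classical
  set U := hyperfilter ℕ with hUdef
  obtain ⟨b, hS⟩ : ∃ b : Bool, {n | ({m | f n m} ∈ U ↔ b = true)} ∈ U := by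
    by_cases h : {n | {m | f n m} ∈ U} ∈ U
    · exact ⟨true, by simpa using h⟩
    · refine ⟨false, ?_⟩
      rw [← Ultrafilter.compl_mem_iff_notMem] at h
      simpa [Set.compl_setOf] using h
  set S := {n | ({m | f n m} ∈ U ↔ b = true)} with hSdef
  have hT : ∀ n ∈ S, {m | f n m ↔ b = true} ∈ U := by
    intro n hn
    cases b with
    | true =>
      have h1 : {m | f n m} ∈ U := by simpa [hSdef] using hn
      exact mem_of_superset h1 (fun m hm => by simpa using hm)
    | false =>
      have h1 : {m | f n m} ∉ U := by simpa [hSdef] using hn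
      rw [← Ultrafilter.compl_mem_iff_notMem] at h1
      exact mem_of_superset h1 (fun m hm => by simpa using hm)
  have hgt : ∀ k : ℕ, {m | k < m} ∈ U := by
    intro k
    have : {m : ℕ | k < m} = {m : ℕ | m ≤ k}ᶜ := by ext m; simp
    rw [this]
    exact compl_mem_hyperfilter_of_finite (Set.finite_le_nat k)
  let pick : Set ℕ → ℕ := fun W => if h : W.Nonempty then h.choose else 0
  have hpick : ∀ W : Set ℕ, W ∈ U → pick W ∈ W := by
    intro W hW
    have hne : W.Nonempty := Ultrafilter.nonempty_of_mem hW
    simp only [pick, dif_pos hne]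
    exact hne.choose_spec
  let step : Set ℕ → Set ℕ :=
    fun W => W ∩ ({m | f (pick W) m ↔ b = true} ∩ {m | pick W < m})
  let Wseq : ℕ → Set ℕ := fun n => step^[n] S
  have hWmem : ∀ n, Wseq n ∈ U ∧ Wseq n ⊆ S := by
    intro n
    induction n with
    | zero => exact ⟨hS, subset_rfl⟩
    | succ n ih =>
      have hiter : Wseq (n + 1) = step (Wseq n) := Function.iterate_succ_apply' step n S
      have hp : pick (Wseq n) ∈ S := ih.2 (hpick _ ih.1)
      constructor
      · rw [hiter]
        exact inter_mem ih.1 (inter_mem (hT _ hp) (hgt _))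
      · rw [hiter]
        exact (Set.inter_subset_left).trans ih.2
  have hWsucc : ∀ n, Wseq (n + 1) = step (Wseq n) := fun n => Function.iterate_succ_apply' step n S
  have hchain : ∀ k l, k ≤ l → Wseq l ⊆ Wseq k := by
    intro k l hkl
    induction l, hkl using Nat.le_induction with
    | base => exact subset_rfl
    | succ l hkl ih =>
      rw [hWsucc]
      exact (Set.inter_subset_left).trans ih
  set g : ℕ → ℕ := fun n => pick (Wseq n) with hgdef
  have key : ∀ k l, k < l → (f (g k) (g l) ↔ b = true) ∧ g k < g l := by
    intro k l hkl
    have hgl : g l ∈ Wseq l := hpick _ (hWmem l).1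
    have : g l ∈ Wseq (k + 1) := hchain _ _ hkl hgl
    rw [hWsucc] at this
    exact ⟨this.2.1, this.2.2⟩
  exact ⟨g, b, fun k l hkl => (key k l hkl).2, fun k l hkl => (key k l hkl).1⟩

/-- A triangular configuration (`z n` connected-or-equal to `y m` exactly for `m < n`,
and not connected-or-equal on the diagonal) yields one of the two forbidden variations. -/
lemma no_triangular {X : Type*} (Γ : X → X → Prop) (hsym : Symmetric Γ)
    (y z : ℕ → X)
    (h1 : ∀ m n, m < n → z n = y m ∨ Γ (z n) (y m))
    (h2 : ∀ n, ¬ (z n = y n ∨ Γ (z n) (y n))) :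
    VariationEmbedding Γ (fun n m => m < n) ∨ VariationEmbedding Γ (fun n m => m ≠ n) := by
  classical
  have hyinj : ∀ m n, m < n → y m ≠ y n := by
    intro m n hmn he
    exact h2 n (he ▸ h1 m n hmn)
  have hzinj : ∀ m n, m < n → z m ≠ z n := by
    intro m n hmn he
    exact h2 m (he ▸ h1 m n hmn)
  -- Apply Ramsey five times
  obtain ⟨g1, c1, hg1, hh1⟩ := infinite_ramsey_pairs (fun k l => Γ (z k) (z l))
  obtain ⟨g2, c2, hg2, hh2⟩ := infinite_ramsey_pairs (fun k l => Γ (y (g1 k)) (y (g1 l)))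
  obtain ⟨g3, c3, hg3, hh3⟩ :=
    infinite_ramsey_pairs (fun k l => Γ (z (g1 (g2 k))) (y (g1 (g2 l))))
  obtain ⟨g4, c4, hg4, hh4⟩ :=
    infinite_ramsey_pairs (fun k l => z (g1 (g2 (g3 k))) = y (g1 (g2 (g3 l))))
  obtain ⟨g5, c5, hg5, hh5⟩ :=
    infinite_ramsey_pairs (fun k l => z (g1 (g2 (g3 (g4 l)))) = y (g1 (g2 (g3 (g4 k)))))
  set G : ℕ → ℕ := fun n => g1 (g2 (g3 (g4 (g5 n)))) with hGdef
  have hG : StrictMono G := hg1.comp (hg2.comp (hg3.comp (hg4.comp hg5)))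
  set Z : ℕ → X := fun n => z (G n) with hZdef
  set Y : ℕ → X := fun n => y (G n) with hYdef
  have hG345 : StrictMono fun n => g3 (g4 (g5 n)) := hg3.comp (hg4.comp hg5)
  have hG45 : StrictMono fun n => g4 (g5 n) := hg4.comp hg5
  have hZZ : ∀ k l, k < l → (Γ (Z k) (Z l) ↔ c1 = true) := by
    intro k l hkl
    exact hh1 _ _ ((hg2.comp hG345) hkl)
  have hYY : ∀ k l, k < l → (Γ (Y k) (Y l) ↔ c2 = true) := by
    intro k l hkl
    exact hh2 _ _ (hG345 hkl)
  have hZY : ∀ k l, k < l → (Γ (Z k) (Y l) ↔ c3 = true) := by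
    intro k l hkl
    exact hh3 _ _ (hG45 hkl)
  have hE4 : ∀ k l, k < l → (Z k = Y l ↔ c4 = true) := by
    intro k l hkl
    exact hh4 _ _ (hg5 hkl)
  have hE5 : ∀ k l, k < l → (Z l = Y k ↔ c5 = true) := by
    intro k l hkl
    exact hh5 _ _ hkl
  have hc4 : c4 = false := by
    by_contra h
    have hc4t : c4 = true := by cases c4 <;> simp_all
    have e1 : Z 0 = Y 1 := (hE4 0 1 one_pos).2 hc4t
    have e2 : Z 0 = Y 2 := (hE4 0 2 two_pos).2 hc4t
    exact hyinj (G 1) (G 2) (hG one_lt_two) (e1.symm.trans e2)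
  have hc5 : c5 = false := by
    by_contra h
    have hc5t : c5 = true := by cases c5 <;> simp_all
    have e1 : Z 2 = Y 0 := (hE5 0 2 two_pos).2 hc5t
    have e2 : Z 2 = Y 1 := (hE5 1 2 one_lt_two).2 hc5t
    exact hyinj (G 0) (G 1) (hG one_pos) (e1.symm.trans e2)
  have hne4 : ∀ k l, k < l → Z k ≠ Y l := by
    intro k l hkl h
    rw [hE4 k l hkl] at h; simp [hc4] at h
  have hne5 : ∀ k l, k < l → Z l ≠ Y k := by
    intro k l hkl h
    rw [hE5 k l hkl] at h; simp [hc5] at h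
  have hlow : ∀ k l, k < l → Γ (Z l) (Y k) := by
    intro k l hkl
    rcases h1 (G k) (G l) (hG hkl) with h | h
    · exact absurd h (hne5 k l hkl)
    · exact h
  have hdiag : ∀ n, ¬ (Z n = Y n) ∧ ¬ Γ (Z n) (Y n) := by
    intro n
    have := h2 (G n)
    push_neg at this
    exact this
  have hZinj : Function.Injective Z := by
    intro m n h
    by_contra hne
    rcases Nat.lt_or_ge m n with hmn | hmn
    · exact hzinj (G m) (G n) (hG hmn) h
    · rcases Nat.lt_or_ge n m with hnm | hnm
      · exact hzinj (G n) (G m) (hG hnm) h.symm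
      · exact hne (by omega)
  have hYinj : Function.Injective Y := by
    intro m n h
    by_contra hne
    rcases Nat.lt_or_ge m n with hmn | hmn
    · exact hyinj (G m) (G n) (hG hmn) h
    · rcases Nat.lt_or_ge n m with hnm | hnm
      · exact hyinj (G n) (G m) (hG hnm) h.symm
      · exact hne (by omega)
  have hZYne : ∀ n m, Z n ≠ Y m := by
    intro n m
    rcases lt_trichotomy n m with h | h | h
    · exact hne4 n m h
    · exact h ▸ (hdiag n).1
    · exact hne5 m n h
  have hZc : ∀ n m, n ≠ m → (Γ (Z n) (Z m) ↔ c1 = true) := by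
    intro n m hnm
    rcases lt_trichotomy n m with h | h | h
    · exact hZZ n m h
    · exact absurd h hnm
    · exact ⟨fun hg => (hZZ m n h).1 (hsym hg), fun hb => hsym ((hZZ m n h).2 hb)⟩
  have hYc : ∀ n m, n ≠ m → (Γ (Y n) (Y m) ↔ c2 = true) := by
    intro n m hnm
    rcases lt_trichotomy n m with h | h | h
    · exact hYY n m h
    · exact absurd h hnm
    · exact ⟨fun hg => (hYY m n h).1 (hsym hg), fun hb => hsym ((hYY m n h).2 hb)⟩
  cases hc3 : c3 with
  | false =>
    left
    refine ⟨Z, Y, c1, c2, hZinj, hYinj, hZYne, hZc, hYc, ?_⟩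
    intro n m
    rcases lt_trichotomy m n with h | h | h
    · simpa [h] using hlow m n h
    · subst h
      simpa using (hdiag _).2
    · have := hZY n m h
      rw [hc3] at this
      simp only [Bool.false_eq_true, iff_false] at this
      simp [this, not_lt_of_gt h, le_of_lt h]
  | true =>
    right
    refine ⟨Z, Y, c1, c2, hZinj, hYinj, hZYne, hZc, hYc, ?_⟩
    intro n m
    rcases lt_trichotomy m n with h | h | h
    · simpa [h.ne] using hlow m n h
    · subst h
      simpa using (hdiag _).2
    · have := (hZY n m h).2 (by rw [hc3])
      simpa [h.ne'] using this

/-- In a Noetherian graph, among the sets `{w | ∀ u ∈ b, w = u ∨ Γ w u}` for finite `b ⊆ a`,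
there is a minimal one. -/
lemma exists_minimal_clique_set {X : Type*} (Γ : X → X → Prop) (hsym : Symmetric Γ)
    (hnoeth : GraphNoetherian Γ) (a : Set X) :
    ∃ b : Finset X, ↑b ⊆ a ∧ ∀ b' : Finset X, ↑b' ⊆ a →
      {w | ∀ u ∈ b', w = u ∨ Γ w u} ⊆ {w | ∀ u ∈ b, w = u ∨ Γ w u} →
      {w | ∀ u ∈ b, w = u ∨ Γ w u} ⊆ {w | ∀ u ∈ b', w = u ∨ Γ w u} := by
  classical
  by_contra hcon
  push_neg at hcon
  have H : ∀ b : Finset X, ↑b ⊆ a → ∃ b' : Finset X, ↑b' ⊆ a ∧ b ⊆ b' ∧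
      ∃ w, (∀ u ∈ b, w = u ∨ Γ w u) ∧ ∃ u ∈ b', ¬(w = u ∨ Γ w u) := by
    intro b hb
    obtain ⟨b', hb'a, hsub, hnsub⟩ := hcon b hb
    rw [Set.not_subset] at hnsub
    obtain ⟨w, hw1, hw2⟩ := hnsub
    refine ⟨b ∪ b', ?_, Finset.subset_union_left, w, hw1, ?_⟩
    · rw [Finset.coe_union]
      exact Set.union_subset hb hb'a
    · simp only [Set.mem_setOf_eq, not_forall] at hw2
      obtain ⟨u, hu, hnu⟩ := hw2
      exact ⟨u, Finset.mem_union_right _ hu, hnu⟩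
  choose next hnexta hnextsub hwit using H
  let seq : ℕ → {s : Finset X // (↑s : Set X) ⊆ a} := fun n =>
    Nat.rec ⟨∅, by simp⟩ (fun _ p => ⟨next p.1 p.2, hnexta p.1 p.2⟩) n
  have hseqsucc : ∀ n, (seq (n + 1)).1 = next (seq n).1 (seq n).2 := fun n => rfl
  have hchain : ∀ m n, m ≤ n → (seq m).1 ⊆ (seq n).1 := by
    intro m n hmn
    induction n, hmn using Nat.le_induction with
    | base => exact Finset.Subset.rfl
    | succ n hmn ih =>
      refine ih.trans ?_
      rw [hseqsucc]
      exact hnextsub _ _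
  have hW := fun n => hwit (seq n).1 (seq n).2
  choose z hz u hu hnadj using hW
  have h1 : ∀ m n, m < n → z n = u m ∨ Γ (z n) (u m) := by
    intro m n hmn
    apply hz n
    have : u m ∈ (seq (m + 1)).1 := by rw [hseqsucc]; exact hu m
    exact hchain (m + 1) n hmn this
  rcases no_triangular Γ hsym u z h1 hnadj with h | h
  · exact hnoeth.1 h
  · exact hnoeth.2 h

theorem good_set_closure
    {X : Type*} [TopologicalSpace X] [PolishSpace X]
    (Γ : X → X → Prop) (hsym : Symmetric Γ)
    (hclosed : IsClosed {p : X × X | Γ p.1 p.2 ∨ p.1 = p.2})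
    (hnoeth : GraphNoetherian Γ)
    (A : Set X) (hA : GoodSet Γ A) :
    (∀ (x : X) (a : Set X), a ⊆ A → (∀ y ∈ a, Γ x y) →
      AccPt x (Filter.principal a) → x ∈ A) ∧
    ∀ x ∉ A, ∃ O : Set X, IsOpen O ∧ x ∈ O ∧ ∀ y ∈ A, Γ x y → y ∉ O := by
  classical
  have part1 : ∀ (x : X) (a : Set X), a ⊆ A → (∀ y ∈ a, Γ x y) →
      AccPt x (Filter.principal a) → x ∈ A := by
    intro x a haA hconn hacc
    obtain ⟨b, hba, hmin⟩ := exists_minimal_clique_set Γ hsym hnoeth a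
    have hxheart : x ∈ heartF Γ b := by
      constructor
      · intro y hy
        exact Or.inr (hconn y (hba hy))
      · intro w hw
        have hall : ∀ y ∈ a, w = y ∨ Γ w y := by
          intro y hy
          have hsub : {v | ∀ u ∈ insert y b, v = u ∨ Γ v u} ⊆ {v | ∀ u ∈ b, v = u ∨ Γ v u} :=
            fun v hv u hu => hv u (Finset.mem_insert_of_mem hu)
          have hins : (↑(insert y b) : Set X) ⊆ a := by
            rw [Finset.coe_insert]
            exact Set.insert_subset hy hba
          exact hmin (insert y b) hins hsub hw y (Finset.mem_insert_self y b)
        have hcl : IsClosed {v | Γ w v ∨ w = v} :=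
          hclosed.preimage (Continuous.prodMk_right w)
        have hsub : a ⊆ {v | Γ w v ∨ w = v} := fun y hy => (hall y hy).symm
        have hxcl : x ∈ closure a :=
          mem_closure_iff_clusterPt.2 hacc.clusterPt
        have hx : x ∈ {v | Γ w v ∨ w = v} := hcl.closure_subset_iff.2 hsub hxcl
        rcases hx with h | h
        · exact Or.inr (hsym h)
        · exact Or.inl h.symm
    exact hA b (fun u hu => haA (hba hu)) hxheart
  refine ⟨part1, ?_⟩
  intro x hx
  by_contra hO
  push_neg at hO
  apply hx
  refine part1 x {y | y ∈ A ∧ Γ x y} (fun y hy => hy.1) (fun y hy => hy.2) ?_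
  rw [accPt_iff_nhds]
  intro U hU
  obtain ⟨O, hOU, hOopen, hxO⟩ := mem_nhds_iff.1 hU
  obtain ⟨y, hyA, hxy, hyO⟩ := hO O hOopen hxO
  refine ⟨y, ⟨hOU hyO, hyA, hxy⟩, ?_⟩
  intro he
  subst he
  exact hx hyA
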